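/- Let U, W be graphons and S : L²[0,1] → L²[0,1] an operator with S 1 = 1 and S* 1 = 1. Then for the path P_ℓ of length ℓ, |t(P_ℓ, U) − t(P_ℓ, W)| ≤ ℓ · ‖T_U ∘ S − S ∘ T_W‖_{2→2}. -/

import Mathlib

open MeasureTheory

/-- The constant-one function of `L²[0,1]`. -/
noncomputable def oneL2 : Lp ℝ 2 (volume : Measure unitInterval) :=
  indicatorConstLp 2 MeasurableSet.univ (measure_ne_top _ _) (1 : ℝ)

lemma oneL2_ae : ⇑oneL2 =ᵐ[volume] fun _ => (1:ℝ) := by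
  unfold oneL2
  filter_upwards [indicatorConstLp_coeFn (μ := (volume : Measure unitInterval))
    (p := 2) (hs := MeasurableSet.univ) (hμs := measure_ne_top _ _) (c := (1:ℝ))] with x hx
  rw [hx]; simp

lemma norm_oneL2 : ‖oneL2‖ = 1 := by
  rw [oneL2, norm_indicatorConstLp (by norm_num) (by norm_num)]
  simp

lemma l1_le_l2 (f : Lp ℝ 2 (volume : Measure unitInterval)) : ∫ y, ‖f y‖ ≤ ‖f‖ := by
  have h := real_inner_le_norm (|f|) oneL2
  rw [L2.inner_def] at h
  have heq : ∫ y, inner ℝ ((|f| : Lp ℝ 2 _) y) (oneL2 y) = ∫ y, ‖f y‖ := by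
    refine integral_congr_ae ?_
    filter_upwards [Lp.coeFn_abs f, oneL2_ae] with y h1 h2
    rw [h1, h2]
    simp [Real.norm_eq_abs, RCLike.inner_apply]
  rw [heq, norm_abs_eq_norm, norm_oneL2, mul_one] at h
  exact h

lemma contract (K : unitInterval → unitInterval → ℝ) (hK : ∀ x y, |K x y| ≤ 1)
    (T : Lp ℝ 2 (volume : Measure unitInterval) →L[ℝ] Lp ℝ 2 (volume : Measure unitInterval))
    (hT : ∀ f, ⇑(T f) =ᵐ[volume] fun x => ∫ y, K x y * f y)
    (f : Lp ℝ 2 (volume : Measure unitInterval)) : ‖T f‖ ≤ ‖f‖ := by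
  have hf1 : Integrable (⇑f) volume := (Lp.memLp f).integrable (by norm_num)
  have hC : (0:ℝ) ≤ ∫ y, ‖f y‖ := integral_nonneg (fun y => norm_nonneg _)
  have hb : ∀ᵐ x ∂(volume : Measure unitInterval), ‖(T f) x‖ ≤ ∫ y, ‖f y‖ := by
    filter_upwards [hT f] with x hx
    rw [hx]
    calc ‖∫ y, K x y * f y‖ ≤ ∫ y, ‖K x y * f y‖ := norm_integral_le_integral_norm _
      _ ≤ ∫ y, ‖f y‖ := by
          refine integral_mono_of_nonneg (Filter.Eventually.of_forall fun y => norm_nonneg _)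
            hf1.norm (Filter.Eventually.of_forall fun y => ?_)
          show ‖K x y * f y‖ ≤ ‖f y‖
          rw [norm_mul]
          calc ‖K x y‖ * ‖f y‖ ≤ 1 * ‖f y‖ := by
                gcongr
                exact (Real.norm_eq_abs _) ▸ hK x y
            _ = ‖f y‖ := one_mul _
  calc ‖T f‖ ≤ (measureUnivNNReal (volume : Measure unitInterval) : ℝ) ^
        (2:ENNReal).toReal⁻¹ * (∫ y, ‖f y‖) := Lp.norm_le_of_ae_bound hC hb
    _ = ∫ y, ‖f y‖ := by simp [measureUnivNNReal]
    _ ≤ ‖f‖ := l1_le_l2 f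

lemma pow_contract (T : Lp ℝ 2 (volume : Measure unitInterval) →L[ℝ]
      Lp ℝ 2 (volume : Measure unitInterval))
    (hT : ∀ f, ‖T f‖ ≤ ‖f‖) (n : ℕ)
    (f : Lp ℝ 2 (volume : Measure unitInterval)) : ‖(T ^ n) f‖ ≤ ‖f‖ := by
  induction n generalizing f with
  | zero => simp [pow_zero]
  | succ n ih =>
      rw [pow_succ]
      calc ‖(T ^ n * T) f‖ = ‖(T ^ n) (T f)‖ := rfl
        _ ≤ ‖T f‖ := ih _
        _ ≤ ‖f‖ := hT f

theorem stmt7 (U W : unitInterval → unitInterval → ℝ)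
    (hUmeas : Measurable (Function.uncurry U)) (hWmeas : Measurable (Function.uncurry W))
    (hUsymm : ∀ x y, U x y = U y x) (hWsymm : ∀ x y, W x y = W y x)
    (hU01 : ∀ x y, U x y ∈ Set.Icc (0 : ℝ) 1) (hW01 : ∀ x y, W x y ∈ Set.Icc (0 : ℝ) 1)
    (TU TW S : Lp ℝ 2 (volume : Measure unitInterval) →L[ℝ]
      Lp ℝ 2 (volume : Measure unitInterval))
    (hTU : ∀ f : Lp ℝ 2 (volume : Measure unitInterval),
      ⇑(TU f) =ᵐ[volume] fun x => ∫ y, U x y * f y)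
    (hTW : ∀ f : Lp ℝ 2 (volume : Measure unitInterval),
      ⇑(TW f) =ᵐ[volume] fun x => ∫ y, W x y * f y)
    (hS1 : S oneL2 = oneL2)
    (hSadj1 : ContinuousLinearMap.adjoint S oneL2 = oneL2)
    (ℓ : ℕ) :
    |(inner ℝ oneL2 ((TU ^ ℓ) oneL2) : ℝ) - (inner ℝ oneL2 ((TW ^ ℓ) oneL2) : ℝ)| ≤
      (ℓ : ℝ) * ‖TU ∘L S - S ∘L TW‖ := by
  set D := TU ∘L S - S ∘L TW with hD
  have hUc : ∀ f, ‖TU f‖ ≤ ‖f‖ := by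
    intro f
    refine contract U (fun x y => ?_) TU hTU f
    have h := hU01 x y
    exact abs_le.2 ⟨by linarith [h.1], h.2⟩
  have hWc : ∀ f, ‖TW f‖ ≤ ‖f‖ := by
    intro f
    refine contract W (fun x y => ?_) TW hTW f
    have h := hW01 x y
    exact abs_le.2 ⟨by linarith [h.1], h.2⟩
  have key : ∀ n : ℕ, ∀ g : Lp ℝ 2 (volume : Measure unitInterval), ‖g‖ ≤ 1 →
      |(inner ℝ oneL2 ((TU ^ n) (S g)) : ℝ) - (inner ℝ oneL2 (S ((TW ^ n) g)) : ℝ)| ≤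
        (n : ℝ) * ‖D‖ := by
    intro n
    induction n with
    | zero =>
        intro g hg
        simp only [pow_zero, ContinuousLinearMap.one_apply, Nat.cast_zero, zero_mul]
        simp
    | succ n ih =>
        intro g hg
        have hgW : ‖TW g‖ ≤ 1 := le_trans (hWc g) hg
        have hA : (TU ^ (n+1)) (S g) = (TU ^ n) (TU (S g)) := by
          rw [pow_succ]; rfl
        have hB : (TW ^ (n+1)) g = (TW ^ n) (TW g) := by
          rw [pow_succ]; rfl
        have step1 : |(inner ℝ oneL2 ((TU ^ (n+1)) (S g)) : ℝ) -
            (inner ℝ oneL2 ((TU ^ n) (S (TW g))) : ℝ)| ≤ ‖D‖ := by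
          rw [hA, ← inner_sub_right, ← map_sub]
          calc |(inner ℝ oneL2 ((TU ^ n) (TU (S g) - S (TW g))) : ℝ)|
              ≤ ‖oneL2‖ * ‖(TU ^ n) (TU (S g) - S (TW g))‖ := abs_real_inner_le_norm _ _
            _ ≤ 1 * ‖TU (S g) - S (TW g)‖ := by
                rw [norm_oneL2, one_mul, one_mul]
                exact pow_contract TU hUc n _
            _ = ‖D g‖ := by rw [one_mul]; rfl
            _ ≤ ‖D‖ * ‖g‖ := D.le_opNorm g
            _ ≤ ‖D‖ * 1 := mul_le_mul_of_nonneg_left hg (norm_nonneg D)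
            _ = ‖D‖ := mul_one _
        have step2 : |(inner ℝ oneL2 ((TU ^ n) (S (TW g))) : ℝ) -
            (inner ℝ oneL2 (S ((TW ^ (n+1)) g)) : ℝ)| ≤ (n : ℝ) * ‖D‖ := by
          rw [hB]
          exact ih (TW g) hgW
        calc |(inner ℝ oneL2 ((TU ^ (n+1)) (S g)) : ℝ) -
              (inner ℝ oneL2 (S ((TW ^ (n+1)) g)) : ℝ)|
            ≤ |(inner ℝ oneL2 ((TU ^ (n+1)) (S g)) : ℝ) -
                (inner ℝ oneL2 ((TU ^ n) (S (TW g))) : ℝ)| +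
              |(inner ℝ oneL2 ((TU ^ n) (S (TW g))) : ℝ) -
                (inner ℝ oneL2 (S ((TW ^ (n+1)) g)) : ℝ)| := abs_sub_le _ _ _
          _ ≤ ‖D‖ + (n : ℝ) * ‖D‖ := add_le_add step1 step2
          _ = ((n + 1 : ℕ) : ℝ) * ‖D‖ := by push_cast; ring
  have h1 : (inner ℝ oneL2 ((TU ^ ℓ) oneL2) : ℝ) = (inner ℝ oneL2 ((TU ^ ℓ) (S oneL2)) : ℝ) := by
    rw [hS1]
  have h2 : (inner ℝ oneL2 ((TW ^ ℓ) oneL2) : ℝ) = (inner ℝ oneL2 (S ((TW ^ ℓ) oneL2)) : ℝ) := by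
    rw [← ContinuousLinearMap.adjoint_inner_left S, hSadj1]
  rw [h1, h2]
  exact key ℓ oneL2 (le_of_eq norm_oneL2)
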